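/- Let X be a Tychonoff space, let 𝒜 ⊆ ℘(X) be an ideal-base all of whose members are closed in X, suppose X is 𝒜-normal, and let ℬ ⊆ ℘(X) be such that every member of ℬ is ℝ-bounded and ⋃ℬ = X. Consider the game 𝔊₁ in which in round n One picks A_n ∈ 𝒜, Two responds with an open set V_n ⊆ X with A_n ⊆ V_n, and Two wins iff some B ∈ ℬ satisfies B ⊆ V_n for at most finitely many n; and the game 𝔊₂ in which in round n One plays a nonempty open subset U_n of C_𝒜(X), Two picks g_n ∈ U_n, and Two wins iff {g_n : n ∈ ω} is a closed discrete subset of C_ℬ(X). Then 𝔊₁ ≤_II 𝔊₂: if Two has a winning Markov strategy (respectively, winning strategy) in 𝔊₁ then Two has one in 𝔊₂, and if One has no winning strategy (respectively, no winning predetermined strategy) in 𝔊₁ then One has none in 𝔊₂. -/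

import Mathlib

/-!
ω-round single selection games, with winning condition given by a predicate `W` on the
sequence of Two's selections (Two wins a run iff `W` holds of it).
-/

/-- One has a winning strategy: `σ` maps Two's previous picks to a member of `𝒜`, and
defeats every compatible sequence of picks by Two. -/
def OneWinsG {β : Type*} (𝒜 : Set (Set β)) (W : (ℕ → β) → Prop) : Prop :=
  ∃ σ : List β → Set β, (∀ l, σ l ∈ 𝒜) ∧
    ∀ x : ℕ → β, (∀ n, x n ∈ σ (List.ofFn fun i : Fin n => x i)) → ¬ W x

/-- One has a winning predetermined strategy (a function of the round number only). -/
def OnePreG {β : Type*} (𝒜 : Set (Set β)) (W : (ℕ → β) → Prop) : Prop :=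
  ∃ p : ℕ → Set β, (∀ n, p n ∈ 𝒜) ∧ ∀ x : ℕ → β, (∀ n, x n ∈ p n) → ¬ W x

/-- Two has a winning strategy: `τ` maps One's previous moves and One's current move to
a selection from the current move, and wins against every legal sequence of moves by One. -/
def TwoWinsG {β : Type*} (𝒜 : Set (Set β)) (W : (ℕ → β) → Prop) : Prop :=
  ∃ τ : List (Set β) → Set β → β, (∀ l A, A ∈ 𝒜 → τ l A ∈ A) ∧
    ∀ A : ℕ → Set β, (∀ n, A n ∈ 𝒜) →
      W fun n => τ (List.ofFn fun i : Fin n => A i) (A n)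

/-- Two has a winning Markov strategy (a function of One's latest move and the round). -/
def TwoMarkovG {β : Type*} (𝒜 : Set (Set β)) (W : (ℕ → β) → Prop) : Prop :=
  ∃ τ : Set β → ℕ → β, (∀ A ∈ 𝒜, ∀ n, τ A n ∈ A) ∧
    ∀ A : ℕ → Set β, (∀ n, A n ∈ 𝒜) → W fun n => τ (A n) n

/-- `G₁(𝒜,W) ≤_II G₁(ℬ,V)`: transfer of winning (Markov) strategies for Two and of
non-existence of winning (predetermined) strategies for One. -/
def LeTwoG {β γ : Type*} (𝒜 : Set (Set β)) (W : (ℕ → β) → Prop)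
    (ℬ : Set (Set γ)) (V : (ℕ → γ) → Prop) : Prop :=
  (TwoMarkovG 𝒜 W → TwoMarkovG ℬ V) ∧ (TwoWinsG 𝒜 W → TwoWinsG ℬ V) ∧
  (¬ OneWinsG 𝒜 W → ¬ OneWinsG ℬ V) ∧ (¬ OnePreG 𝒜 W → ¬ OnePreG ℬ V)

open Set Topology

/-- `𝒜` is an ideal-base: any two members have their union contained in a third member. -/
def IdealBase {X : Type*} (𝒜 : Set (Set X)) : Prop :=
  ∀ A₁ ∈ 𝒜, ∀ A₂ ∈ 𝒜, ∃ A₃ ∈ 𝒜, A₁ ∪ A₂ ⊆ A₃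

variable {X : Type*} [TopologicalSpace X]

/-- The basic set `[f;A,ε] = {g : sup_{x∈A} |f x − g x| < ε}`, the sup condition being
expressed as the existence of a bound `δ < ε`. -/
def fnBall (f : C(X, ℝ)) (A : Set X) (ε : ℝ) : Set C(X, ℝ) :=
  {g | ∃ δ : ℝ, δ < ε ∧ ∀ x ∈ A, |f x - g x| ≤ δ}

/-- The `𝒜`-open topology on `C(X,ℝ)` (i.e. the topology of `C_𝒜(X)`), generated by the
sets `[f;A,ε]` for `f ∈ C(X,ℝ)`, `A ∈ 𝒜`, `ε > 0`. -/
def setOpenTop (𝒜 : Set (Set X)) : TopologicalSpace C(X, ℝ) :=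
  TopologicalSpace.generateFrom
    {S | ∃ f : C(X, ℝ), ∃ A ∈ 𝒜, ∃ ε : ℝ, 0 < ε ∧ S = fnBall f A ε}

/-- The collection `𝒩_{C_𝒜(X)}(𝟎)` of open neighborhoods of the zero function in
`C_𝒜(X)`. -/
def Nbhd0 (𝒜 : Set (Set X)) : Set (Set C(X, ℝ)) :=
  {U | IsOpen[setOpenTop 𝒜] U ∧ (0 : C(X, ℝ)) ∈ U}

/-- `X` is `𝒜`-normal: for every `A ∈ 𝒜` and open `U ⊇ A` there is a continuous
`g : X → [0,1]` with `g ≡ 0` on `A` and `g ≡ 1` off `U`. -/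
def ANormal (𝒜 : Set (Set X)) : Prop :=
  ∀ A ∈ 𝒜, ∀ U : Set X, IsOpen U → A ⊆ U →
    ∃ g : C(X, ℝ), (∀ x, g x ∈ Icc (0 : ℝ) 1) ∧ (∀ x ∈ A, g x = 0) ∧ ∀ x ∉ U, g x = 1

/-- `B ⊆ X` is `ℝ`-bounded: every continuous real-valued function on `X` is bounded
on `B`. -/
def RBounded (B : Set X) : Prop :=
  ∀ f : C(X, ℝ), ∃ M : ℝ, ∀ x ∈ B, |f x| ≤ M

/-- `D` is a closed discrete subset in the topology `t`: `D` is closed and has no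
accumulation point (every point has a neighborhood meeting `D` in at most itself). -/
def ClosedDiscreteIn {Y : Type*} (t : TopologicalSpace Y) (D : Set Y) : Prop :=
  IsClosed[t] D ∧ ∀ y : Y, ∃ U : Set Y, IsOpen[t] U ∧ y ∈ U ∧ U ∩ D ⊆ {y}


section Helpers

/-- Generic: a winning Markov strategy for Two yields a winning strategy. -/
theorem twoMarkov_twoWins {β : Type*} {𝒜 : Set (Set β)} {W : (ℕ → β) → Prop}
    (h : TwoMarkovG 𝒜 W) : TwoWinsG 𝒜 W := by
  obtain ⟨τ, h1, h2⟩ := h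
  refine ⟨fun l A => τ A l.length, fun l A hA => h1 A hA _, fun A hA => ?_⟩
  have : (fun n => τ (A n) (List.ofFn fun i : Fin n => A i).length) = fun n => τ (A n) n :=
    funext fun n => by rw [List.length_ofFn]
  rw [this]
  exact h2 A hA

/-- Generic: a winning predetermined strategy for One yields a winning strategy. -/
theorem onePre_oneWins {β : Type*} {𝒜 : Set (Set β)} {W : (ℕ → β) → Prop}
    (h : OnePreG 𝒜 W) : OneWinsG 𝒜 W := by
  obtain ⟨p, h1, h2⟩ := h
  refine ⟨fun l => p l.length, fun l => h1 _, fun x hx => h2 x fun n => by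
    simpa using hx n⟩

theorem mem_fnBall_self {X : Type*} [TopologicalSpace X] {f : C(X,ℝ)} {A : Set X} {ε : ℝ}
    (hε : 0 < ε) : f ∈ fnBall f A ε :=
  ⟨0, hε, fun x _ => by simp⟩

theorem fnBall_mono {X : Type*} [TopologicalSpace X] {f : C(X,ℝ)} {A A' : Set X} {ε ε' : ℝ}
    (hA : A ⊆ A') (hε : ε' ≤ ε) : fnBall f A' ε' ⊆ fnBall f A ε := fun _ ⟨δ, hδ, hb⟩ =>
  ⟨δ, lt_of_lt_of_le hδ hε, fun x hx => hb x (hA hx)⟩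

theorem isOpen_fnBall {X : Type*} [TopologicalSpace X] {𝒜 : Set (Set X)} {f : C(X,ℝ)}
    {A : Set X} {ε : ℝ} (hA : A ∈ 𝒜) (hε : 0 < ε) : IsOpen[setOpenTop 𝒜] (fnBall f A ε) :=
  TopologicalSpace.GenerateOpen.basic _ ⟨f, A, hA, ε, hε, rfl⟩

/-- Basis lemma: in `C_𝒜(X)` every open set containing `f` contains a ball `[f;A,ε]`. -/
theorem exists_ball_subset {X : Type*} [TopologicalSpace X] {𝒜 : Set (Set X)}
    (hIB : IdealBase 𝒜) {A₀ : Set X} (hA₀ : A₀ ∈ 𝒜)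
    {U : Set C(X,ℝ)} (hU : IsOpen[setOpenTop 𝒜] U) {f : C(X,ℝ)} (hf : f ∈ U) :
    ∃ A ∈ 𝒜, ∃ ε : ℝ, 0 < ε ∧ fnBall f A ε ⊆ U := by
  revert hf
  induction hU with
  | basic S hS =>
    intro hf
    obtain ⟨f₀, A, hA, ε, hε, rfl⟩ := hS
    obtain ⟨δ, hδ, hb⟩ := hf
    refine ⟨A, hA, ε - δ, by linarith, fun g ⟨δ', hδ', hb'⟩ => ?_⟩
    exact ⟨δ + δ', by linarith, fun x hx =>
      (abs_sub_le _ _ _).trans (add_le_add (hb x hx) (hb' x hx))⟩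
  | univ => exact fun _ => ⟨A₀, hA₀, 1, one_pos, fun _ _ => trivial⟩
  | inter U V hU hV ihU ihV =>
    intro hf
    obtain ⟨A₁, hA₁, ε₁, hε₁, hs₁⟩ := ihU hf.1
    obtain ⟨A₂, hA₂, ε₂, hε₂, hs₂⟩ := ihV hf.2
    obtain ⟨A₃, hA₃, hsub⟩ := hIB A₁ hA₁ A₂ hA₂
    refine ⟨A₃, hA₃, min ε₁ ε₂, lt_min hε₁ hε₂, fun g hg => ?_⟩
    exact ⟨hs₁ (fnBall_mono (fun x hx => hsub (Or.inl hx)) (min_le_left _ _) hg),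
      hs₂ (fnBall_mono (fun x hx => hsub (Or.inr hx)) (min_le_right _ _) hg)⟩
  | sUnion S hS ih =>
    rintro ⟨t, ht, hft⟩
    obtain ⟨A, hA, ε, hε, hs⟩ := ih t ht hft
    exact ⟨A, hA, ε, hε, hs.trans (subset_sUnion_of_mem ht)⟩

/-- If 𝒜 has no members, every nonempty `setOpenTop 𝒜`-open set is `univ`. -/
theorem open_of_empty {X : Type*} [TopologicalSpace X] {𝒜 : Set (Set X)}
    (h𝒜 : ∀ A : Set X, A ∉ 𝒜) {U : Set C(X,ℝ)} (hU : IsOpen[setOpenTop 𝒜] U)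
    (hne : U.Nonempty) : U = univ := by
  revert hne
  induction hU with
  | basic S hS =>
    obtain ⟨f, A, hA, _⟩ := hS
    exact absurd hA (h𝒜 A)
  | univ => exact fun _ => rfl
  | inter U V hU hV ihU ihV =>
    rintro ⟨f, hfU, hfV⟩
    rw [ihU ⟨f, hfU⟩, ihV ⟨f, hfV⟩, univ_inter]
  | sUnion S hS ih =>
    rintro ⟨f, t, ht, hft⟩
    exact eq_univ_of_univ_subset ((ih t ht ⟨f, hft⟩) ▸ subset_sUnion_of_mem ht)

theorem cd_of_sep {Y : Type*} (t : TopologicalSpace Y) (D : Set Y)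
    (h : ∀ y : Y, ∃ U : Set Y, IsOpen[t] U ∧ y ∈ U ∧ U ∩ D ⊆ {y}) :
    ClosedDiscreteIn t D := by
  refine ⟨?_, h⟩
  letI := t
  rw [← isOpen_compl_iff, isOpen_iff_forall_mem_open]
  intro y hy
  obtain ⟨U, hUo, hyU, hUD⟩ := h y
  exact ⟨U, fun z hz hzD => hy (hUD ⟨hz, hzD⟩ ▸ hzD), hUo, hyU⟩

/-- The key closed-discreteness criterion. -/
theorem mainCD {X : Type*} [TopologicalSpace X] (ℬ : Set (Set X))
    (hRb : ∀ B ∈ ℬ, RBounded B) (hUB : ⋃₀ ℬ = univ)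
    (V : ℕ → Set X) (g : ℕ → C(X,ℝ)) (hg : ∀ n, ∀ x ∉ V n, g n x = n)
    (B : Set X) (hB : B ∈ ℬ) (hF : {n : ℕ | B ⊆ V n}.Finite) :
    ClosedDiscreteIn (setOpenTop ℬ) (Set.range g) := by
  classical
  apply cd_of_sep
  intro y
  obtain ⟨M, hM⟩ := hRb B hB y
  set F : Set ℕ := {n | B ⊆ V n} ∪ {n : ℕ | (n : ℝ) ≤ M + 1} with hFdef
  have hFfin : F.Finite := by
    refine hF.union (Set.Finite.subset (Set.finite_Iic ⌈M + 1⌉₊) fun n hn => ?_)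
    have : (n : ℝ) ≤ (⌈M + 1⌉₊ : ℝ) := le_trans hn (Nat.le_ceil _)
    exact_mod_cast this
  have hsep : ∀ n : ℕ, ∃ Bn : Set X, ∃ ε : ℝ,
      (g n ≠ y → Bn ∈ ℬ ∧ 0 < ε ∧ g n ∉ fnBall y Bn ε) := by
    intro n
    by_cases hne : g n = y
    · exact ⟨B, 1, fun h => absurd hne h⟩
    · have : ∃ x : X, g n x ≠ y x := by
        by_contra hc
        push_neg at hc
        exact hne (ContinuousMap.ext hc)
      obtain ⟨x, hx⟩ := this
      have hxB : x ∈ ⋃₀ ℬ := hUB ▸ mem_univ x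
      obtain ⟨Bn, hBn, hxBn⟩ := hxB
      refine ⟨Bn, |y x - g n x|, fun _ => ⟨hBn, abs_pos.2 (sub_ne_zero.2 fun h => hx h.symm), ?_⟩⟩
      rintro ⟨δ, hδ, hb⟩
      exact absurd (hb x hxBn) (not_le.2 hδ)
  choose Bn εn hBn using hsep
  set W : ℕ → Set C(X,ℝ) := fun n =>
    if h : g n = y then univ else fnBall y (Bn n) (εn n) with hWdef
  refine ⟨fnBall y B 1 ∩ ⋂ n ∈ F, W n, ?_, ⟨mem_fnBall_self one_pos, ?_⟩, ?_⟩
  · refine TopologicalSpace.GenerateOpen.inter _ _ (isOpen_fnBall hB one_pos) ?_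
    exact @Set.Finite.isOpen_biInter _ _ (setOpenTop ℬ) _ _ hFfin fun n _ => by
      by_cases h : g n = y
      · simp only [hWdef, h, dif_pos]
        exact TopologicalSpace.GenerateOpen.univ
      · simp only [hWdef, h, dif_neg, not_false_iff]
        exact isOpen_fnBall (hBn n h).1 (hBn n h).2.1
  · refine mem_iInter₂.mpr fun n _ => ?_
    by_cases h : g n = y
    · simp [hWdef, h]
    · simp only [hWdef, h, dif_neg, not_false_iff]
      exact mem_fnBall_self (hBn n h).2.1
  · rintro z ⟨⟨hz1, hz2⟩, m, rfl⟩
    by_cases hm : m ∈ F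
    · by_cases hgy : g m = y
      · exact hgy
      · exfalso
        have := mem_iInter₂.mp hz2 m hm
        rw [hWdef] at this
        simp only [hgy, dif_neg, not_false_iff] at this
        exact (hBn m hgy).2.2 this
    · exfalso
      simp only [hFdef, mem_union, mem_setOf_eq, not_or, not_le] at hm
      obtain ⟨hBV, hMm⟩ := hm
      obtain ⟨x, hxB, hxV⟩ := not_subset.mp hBV
      obtain ⟨δ, hδ, hb⟩ := hz1
      have h1 : |y x - g m x| ≤ δ := hb x hxB
      have h2 : g m x = m := hg m x hxV
      have h3 : |y x| ≤ M := hM x hxB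
      rw [h2] at h1
      have : (m : ℝ) - y x ≤ |y x - (m : ℝ)| := by
        rw [abs_sub_comm]; exact le_abs_self _
      linarith [neg_abs_le (y x), le_abs_self (y x)]

/-- The constant sequence `n ↦ const n` is closed discrete in `C_ℬ(X)`. -/
theorem constCD {X : Type*} [TopologicalSpace X] (ℬ : Set (Set X))
    (hRb : ∀ B ∈ ℬ, RBounded B) (hUB : ⋃₀ ℬ = univ) :
    ClosedDiscreteIn (setOpenTop ℬ)
      (Set.range fun n : ℕ => ContinuousMap.const X (n : ℝ)) := by
  by_cases hne : ∃ B ∈ ℬ, B.Nonempty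
  · obtain ⟨B, hB, hBne⟩ := hne
    refine mainCD ℬ hRb hUB (fun _ => ∅) _ (fun n x _ => rfl) B hB ?_
    refine Set.Finite.subset (Set.finite_empty) fun n hn => ?_
    exact absurd (eq_empty_iff_forall_notMem.mpr fun x hx => hn hx) hBne.ne_empty
  · push_neg at hne
    have hX : ∀ x : X, False := fun x => by
      have : x ∈ ⋃₀ ℬ := hUB ▸ mem_univ x
      obtain ⟨B, hB, hxB⟩ := this
      exact absurd ((hne B hB) ▸ hxB) (notMem_empty x)
    have hsub : ∀ a b : C(X,ℝ), a = b := fun a b =>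
      ContinuousMap.ext fun x => (hX x).elim
    exact cd_of_sep _ _ fun y =>
      ⟨univ, TopologicalSpace.GenerateOpen.univ, mem_univ y, fun z _ => hsub z y⟩

/-- Auxiliary accumulator recursion used to translate histories of Two's picks. -/
def convAux {γ β : Type*} (step : List γ → β → γ) : List γ → List β → List γ
  | acc, [] => acc
  | acc, V :: rest => convAux step (acc ++ [step acc V]) rest

theorem convAux_snoc {γ β : Type*} (step : List γ → β → γ) (V : β) :
    ∀ (l : List β) (acc : List γ),
      convAux step acc (l ++ [V]) = convAux step acc l ++ [step (convAux step acc l) V]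
  | [], acc => by simp [convAux]
  | W :: l, acc => by
    simp only [List.cons_append, convAux]
    exact convAux_snoc step V l _

theorem convAux_length {γ β : Type*} (step : List γ → β → γ) :
    ∀ (l : List β) (acc : List γ), (convAux step acc l).length = acc.length + l.length
  | [], acc => by simp [convAux]
  | W :: l, acc => by
    simp only [convAux, convAux_length step l]
    simp [Nat.add_comm, Nat.add_assoc, Nat.add_left_comm]

end Helpers

/-- For a Tychonoff space `X`, an ideal-base `𝒜` of closed sets with `X`
`𝒜`-normal, and `ℬ` consisting of `ℝ`-bounded sets with `⋃ℬ = X`, `𝔊₁ ≤_II 𝔊₂`, where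
in `𝔊₁` One plays `A_n ∈ 𝒜` (identified with the family of open supersets of `A_n`),
Two picks an open `V_n ⊇ A_n`, and Two wins iff some `B ∈ ℬ` satisfies `B ⊆ V_n` for at
most finitely many `n`; and in `𝔊₂` One plays nonempty open subsets of `C_𝒜(X)`, Two
selects a member `g_n`, and Two wins iff `{g_n : n ∈ ω}` is a closed discrete subset of
`C_ℬ(X)`.  (These are `G₁(𝒩[𝒜], ¬Λ(X,ℬ))` and `G₁(𝒯_{C_𝒜(X)}, CD_{C_ℬ(X)})`.) -/
theorem stmt14 [T35Space X]
    (𝒜 ℬ : Set (Set X)) (hA : IdealBase 𝒜) (hAclosed : ∀ A ∈ 𝒜, IsClosed A)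
    (hnorm : ANormal 𝒜) (hRb : ∀ B ∈ ℬ, RBounded B) (hUB : ⋃₀ ℬ = univ) :
    LeTwoG
      {S : Set (Set X) | ∃ A ∈ 𝒜, S = {V : Set X | IsOpen V ∧ A ⊆ V}}
      (fun V : ℕ → Set X => ∃ B ∈ ℬ, {n : ℕ | B ⊆ V n}.Finite)
      {U : Set C(X, ℝ) | IsOpen[setOpenTop 𝒜] U ∧ U.Nonempty}
      (fun g : ℕ → C(X, ℝ) =>
        ClosedDiscreteIn (setOpenTop ℬ) (Set.range g)) := by
  classical
  by_cases h𝒜 : ∃ A₀, A₀ ∈ 𝒜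
  case neg =>
    -- Degenerate case: 𝒜 is empty, so the only nonempty open set in C_𝒜(X) is univ.
    push_neg at h𝒜
    have hdeg : ∀ U ∈ {U : Set C(X, ℝ) | IsOpen[setOpenTop 𝒜] U ∧ U.Nonempty}, U = univ :=
      fun U hU => open_of_empty h𝒜 hU.1 hU.2
    have hM₂ : TwoMarkovG {U : Set C(X, ℝ) | IsOpen[setOpenTop 𝒜] U ∧ U.Nonempty}
        (fun g : ℕ → C(X, ℝ) => ClosedDiscreteIn (setOpenTop ℬ) (Set.range g)) := by
      refine ⟨fun _ n => ContinuousMap.const X (n : ℝ), fun U hU n => ?_, fun A hA => ?_⟩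
      · rw [hdeg U hU]; exact mem_univ _
      · exact constCD ℬ hRb hUB
    have hnotOne₂ : ¬ OneWinsG {U : Set C(X, ℝ) | IsOpen[setOpenTop 𝒜] U ∧ U.Nonempty}
        (fun g : ℕ → C(X, ℝ) => ClosedDiscreteIn (setOpenTop ℬ) (Set.range g)) := by
      rintro ⟨σ, hσ, hwin⟩
      refine hwin (fun n => ContinuousMap.const X (n : ℝ)) (fun n => ?_) (constCD ℬ hRb hUB)
      rw [hdeg _ (hσ _)]; exact mem_univ _
    exact ⟨fun _ => hM₂, fun _ => twoMarkov_twoWins hM₂, fun _ => hnotOne₂,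
      fun _ h => hnotOne₂ (onePre_oneWins h)⟩
  case pos =>
  obtain ⟨A₀, hA₀⟩ := h𝒜
  -- the "build" function: modify f to agree with f on A and equal n outside V
  have key : ∀ (f : C(X,ℝ)) (A V : Set X) (n : ℕ), ∃ g : C(X,ℝ),
      A ∈ 𝒜 → IsOpen V → A ⊆ V → ((∀ x ∈ A, g x = f x) ∧ ∀ x ∉ V, g x = n) := by
    intro f A V n
    by_cases h : A ∈ 𝒜 ∧ IsOpen V ∧ A ⊆ V
    · obtain ⟨hAm, hVo, hAV⟩ := h
      obtain ⟨h01, hh0, hh1⟩ := hnorm A hAm V hVo hAV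
      set hfun := Classical.choose (hnorm A hAm V hVo hAV) with hfd
      refine ⟨f + (Classical.choose (hnorm A hAm V hVo hAV)) *
        (ContinuousMap.const X (n : ℝ) - f), fun _ _ _ => ⟨fun x hx => ?_, fun x hx => ?_⟩⟩
      · have h0 := (Classical.choose_spec (hnorm A hAm V hVo hAV)).2.1 x hx
        simp [h0]
        exact Or.inl h0
      · have h1 := (Classical.choose_spec (hnorm A hAm V hVo hAV)).2.2 x hx
        simp [h1]
        exact (fun c (hc : c = (1 : ℝ)) => by rw [hc]; ring : ∀ c : ℝ, c = 1 → f x + c * (↑n - f x) = ↑n) _ h1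
    · exact ⟨f, fun h1 h2 h3 => absurd ⟨h1, h2, h3⟩ h⟩
  choose bld hbld using key
  -- extract ball data from a nonempty open set
  have pick : ∀ U : Set C(X,ℝ), ∃ (f : C(X,ℝ)) (A : Set X) (ε : ℝ),
      (IsOpen[setOpenTop 𝒜] U ∧ U.Nonempty) →
        (A ∈ 𝒜 ∧ 0 < ε ∧ f ∈ U ∧ fnBall f A ε ⊆ U) := by
    intro U
    by_cases hU : IsOpen[setOpenTop 𝒜] U ∧ U.Nonempty
    · obtain ⟨hUo, f, hf⟩ := hU
      obtain ⟨A, hAm, ε, hε, hsub⟩ := exists_ball_subset hA hA₀ hUo hf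
      exact ⟨f, A, ε, fun _ => ⟨hAm, hε, hf, hsub⟩⟩
    · exact ⟨0, A₀, 1, fun h => absurd h hU⟩
  choose fU AU εU hpick using pick
  set tr : Set C(X,ℝ) → Set (Set X) := fun U => {V : Set X | IsOpen V ∧ AU U ⊆ V} with htrdef
  have htr : ∀ U ∈ {U : Set C(X, ℝ) | IsOpen[setOpenTop 𝒜] U ∧ U.Nonempty},
      tr U ∈ {S : Set (Set X) | ∃ A ∈ 𝒜, S = {V : Set X | IsOpen V ∧ A ⊆ V}} :=
    fun U hU => ⟨AU U, (hpick U hU).1, rfl⟩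
  have hbuild : ∀ U ∈ {U : Set C(X, ℝ) | IsOpen[setOpenTop 𝒜] U ∧ U.Nonempty},
      ∀ V ∈ tr U, ∀ n : ℕ, bld (fU U) (AU U) V n ∈ U ∧
        (∀ x ∉ V, bld (fU U) (AU U) V n x = n) := by
    intro U hU V hV n
    obtain ⟨hAm, hε, hf, hsub⟩ := hpick U hU
    obtain ⟨hVo, hAV⟩ := hV
    obtain ⟨heqA, heqV⟩ := hbld (fU U) (AU U) V n hAm hVo hAV
    exact ⟨hsub ⟨0, hε, fun x hx => by rw [heqA x hx]; simp⟩, heqV⟩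
  refine ⟨?_, ?_, ?_, ?_⟩
  · -- Markov strategies for Two
    rintro ⟨τ, hτmem, hτwin⟩
    refine ⟨fun U n => bld (fU U) (AU U) (τ (tr U) n) n, fun U hU n =>
      (hbuild U hU _ (hτmem (tr U) (htr U hU) n) n).1, fun U hUmem => ?_⟩
    obtain ⟨B, hB, hBF⟩ := hτwin (fun n => tr (U n)) (fun n => htr _ (hUmem n))
    exact mainCD ℬ hRb hUB (fun n => τ (tr (U n)) n) _
      (fun n x hx => (hbuild (U n) (hUmem n) _ (hτmem _ (htr _ (hUmem n)) n) n).2 x hx)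
      B hB hBF
  · -- full strategies for Two
    rintro ⟨τ, hτmem, hτwin⟩
    refine ⟨fun l U => bld (fU U) (AU U) (τ (l.map tr) (tr U)) l.length, fun l U hU =>
      (hbuild U hU _ (hτmem (l.map tr) (tr U) (htr U hU)) l.length).1, fun U hUmem => ?_⟩
    have hmap : ∀ n : ℕ, (List.ofFn fun i : Fin n => U i).map tr
        = List.ofFn fun i : Fin n => tr (U i) := fun n => List.map_ofFn
    have hτw := hτwin (fun n => tr (U n)) (fun n => htr _ (hUmem n))
    obtain ⟨B, hB, hBF⟩ := hτw
    have heq : (fun n => bld (fU (U n)) (AU (U n))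
          (τ ((List.ofFn fun i : Fin n => U i).map tr) (tr (U n)))
          (List.ofFn fun i : Fin n => U i).length)
        = fun n => bld (fU (U n)) (AU (U n))
          (τ (List.ofFn fun i : Fin n => tr (U i)) (tr (U n))) n :=
      funext fun n => by rw [hmap n, List.length_ofFn]
    show ClosedDiscreteIn (setOpenTop ℬ) (Set.range _)
    rw [heq]
    refine mainCD ℬ hRb hUB
      (fun n => τ (List.ofFn fun i : Fin n => tr (U i)) (tr (U n))) _
      (fun n x hx => (hbuild (U n) (hUmem n) _
        (hτmem (List.ofFn fun i : Fin n => tr (U i)) (tr (U n)) (htr _ (hUmem n))) n).2 x hx)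
      B hB hBF
  · -- One's full strategies
    intro hno h₂
    apply hno
    obtain ⟨σ, hσmem, hσwin⟩ := h₂
    set step : List C(X,ℝ) → Set X → C(X,ℝ) :=
      fun acc V => bld (fU (σ acc)) (AU (σ acc)) V acc.length with hstepdef
    refine ⟨fun l => tr (σ (convAux step [] l)), fun l => htr _ (hσmem _), fun V hV => ?_⟩
    rintro ⟨B, hB, hBF⟩
    set g : ℕ → C(X,ℝ) :=
      fun n => step (convAux step [] (List.ofFn fun i : Fin n => V i)) (V n) with hgdef
    have hkey : ∀ n : ℕ, convAux step [] (List.ofFn fun i : Fin n => V i)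
        = List.ofFn fun i : Fin n => g i := by
      intro n
      induction n with
      | zero => simp [convAux]
      | succ n ih =>
        have h1 : (List.ofFn fun i : Fin (n+1) => V i)
            = (List.ofFn fun i : Fin n => V i) ++ [V n] := by
          rw [List.ofFn_succ']; simp [List.concat_eq_append]
        have h2 : (List.ofFn fun i : Fin (n+1) => g i)
            = (List.ofFn fun i : Fin n => g i) ++ [g n] := by
          rw [List.ofFn_succ']; simp [List.concat_eq_append]
        have hgn : step (convAux step [] (List.ofFn fun i : Fin n => V i)) (V n) = g n := rfl
        rw [h1, h2, convAux_snoc, hgn, ih]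
    have hglen : ∀ n : ℕ, g n = bld (fU (σ (List.ofFn fun i : Fin n => g i)))
        (AU (σ (List.ofFn fun i : Fin n => g i))) (V n) n := by
      intro n
      have e1 : g n = step (List.ofFn fun i : Fin n => g i) (V n) := by
        show step (convAux step [] (List.ofFn fun i : Fin n => V i)) (V n) = _
        rw [hkey n]
      rw [e1, hstepdef]
      simp
    have hVlegal : ∀ n : ℕ, V n ∈ tr (σ (List.ofFn fun i : Fin n => g i)) := by
      intro n
      have h : V n ∈ tr (σ (convAux step [] (List.ofFn fun i : Fin n => V i))) := hV n
      rwa [hkey n] at h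
    have hσU : ∀ n : ℕ, σ (List.ofFn fun i : Fin n => g i)
        ∈ {U : Set C(X, ℝ) | IsOpen[setOpenTop 𝒜] U ∧ U.Nonempty} := fun n => hσmem _
    have hlegal : ∀ n : ℕ, g n ∈ σ (List.ofFn fun i : Fin n => g i) := by
      intro n
      rw [hglen n]
      exact (hbuild _ (hσU n) _ (hVlegal n) n).1
    refine hσwin g hlegal ?_
    have hgoff : ∀ n, ∀ x ∉ V n, g n x = n := by
      intro n x hx
      rw [hglen n]
      exact (hbuild _ (hσU n) _ (hVlegal n) n).2 x hx
    exact mainCD ℬ hRb hUB V g hgoff B hB hBF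
  · -- One's predetermined strategies
    intro hno h₂
    apply hno
    obtain ⟨p, hpmem, hpwin⟩ := h₂
    refine ⟨fun n => tr (p n), fun n => htr _ (hpmem n), fun V hV => ?_⟩
    rintro ⟨B, hB, hBF⟩
    refine hpwin (fun n => bld (fU (p n)) (AU (p n)) (V n) n)
      (fun n => (hbuild (p n) (hpmem n) (V n) (hV n) n).1) ?_
    exact mainCD ℬ hRb hUB V _
      (fun n x hx => (hbuild (p n) (hpmem n) (V n) (hV n) n).2 x hx) B hB hBF
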